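/- Let O : ℝ → ℝ be convex and differentiable with strictly increasing surjective derivative o, η ∈ (0,1], P > 0, θ ∈ ℝ. Then p⁻ = clamp(-φ(-θη),0,P), where φ = o⁻¹, is the unique minimizer of q ↦ O(-q) - θ·η·q over q ∈ [0,P]. -/

import Mathlib

lemma aux_strict_min {g g' : ℝ → ℝ} (hg : ∀ x, HasDerivAt g (g' x) x)
    (hmono : StrictMono g') {a b : ℝ} (hne : b ≠ a)
    (hsign : 0 ≤ g' a * (b - a)) : g a < g b := by
  have hdiff : Differentiable ℝ g := fun x => (hg x).differentiableAt
  have hd : deriv g = g' := funext fun x => (hg x).deriv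
  rcases lt_or_gt_of_ne hne with h | h
  · -- b < a
    obtain ⟨c, hc, hceq⟩ := exists_deriv_eq_slope g h
      hdiff.continuous.continuousOn hdiff.differentiableOn
    rw [hd] at hceq
    have h1 : g' c < g' a := hmono hc.2
    have h2 : g' a ≤ 0 := by nlinarith
    have hba : 0 < a - b := by linarith
    have : g a - g b = g' c * (a - b) := by
      field_simp at hceq; linarith
    nlinarith
  · -- a < b
    obtain ⟨c, hc, hceq⟩ := exists_deriv_eq_slope g h
      hdiff.continuous.continuousOn hdiff.differentiableOn
    rw [hd] at hceq
    have h1 : g' a < g' c := hmono hc.1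
    have h2 : 0 ≤ g' a := by nlinarith
    have hba : 0 < b - a := by linarith
    have : g b - g a = g' c * (b - a) := by
      field_simp at hceq; linarith
    nlinarith

theorem stmt5 (O : ℝ → ℝ) (η P θ : ℝ) (φ : ℝ → ℝ)
    (hO : ConvexOn ℝ Set.univ O) (hdiff : Differentiable ℝ O)
    (ho : StrictMono (deriv O)) (hsurj : Function.Surjective (deriv O))
    (hφ : ∀ y, deriv O (φ y) = y)
    (hη : η ∈ Set.Ioc (0:ℝ) 1) (hP : 0 < P) :
    (max 0 (min (-φ (-θ * η)) P)) ∈ Set.Icc (0:ℝ) P ∧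
    ∀ q ∈ Set.Icc (0:ℝ) P, q ≠ max 0 (min (-φ (-θ * η)) P) →
      O (-(max 0 (min (-φ (-θ * η)) P))) - θ * η * max 0 (min (-φ (-θ * η)) P)
        < O (-q) - θ * η * q := by
  set c : ℝ := φ (-θ * η) with hc
  have hco : deriv O c = -θ * η := hφ _
  set qs : ℝ := max 0 (min (-c) P) with hqs
  have hmem : qs ∈ Set.Icc (0:ℝ) P := by
    constructor
    · exact le_max_left _ _
    · exact max_le hP.le (min_le_right _ _)
  refine ⟨hmem, fun q hq hne => ?_⟩
  have hg : ∀ x : ℝ, HasDerivAt (fun q => O (-q) - θ * η * q)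
      (-(deriv O (-x)) - θ * η) x := by
    intro x
    have h1 : HasDerivAt (fun q : ℝ => O (-q)) (deriv O (-x) * (-1)) x :=
      (hdiff (-x)).hasDerivAt.comp x (hasDerivAt_neg x)
    have h2 : HasDerivAt (fun q : ℝ => θ * η * q) (θ * η * 1) x :=
      (hasDerivAt_id x).const_mul _
    have := h1.sub h2
    rw [show -(deriv O (-x)) - θ * η = deriv O (-x) * -1 - θ * η * 1 by ring]
    exact this
  have hmono : StrictMono (fun x : ℝ => -(deriv O (-x)) - θ * η) := by
    intro x y hxy
    have := ho (neg_lt_neg hxy)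
    simpa using sub_lt_sub_right (neg_lt_neg this) (θ * η)
  have hsign : 0 ≤ (-(deriv O (-qs)) - θ * η) * (q - qs) := by
    rcases le_or_gt (-c) 0 with h1 | h1
    · have hq0 : qs = 0 := by
        rw [hqs]
        exact max_eq_left (le_trans (min_le_left _ _) h1)
      have hc0 : (0:ℝ) ≤ c := by linarith
      have := ho.monotone (show (0:ℝ) ≤ c from hc0)
      rw [hco] at this
      rw [hq0]
      simp only [neg_zero]
      nlinarith [hq.1]
    · rcases le_or_gt P (-c) with h2 | h2
      · have hqP : qs = P := by
          rw [hqs, min_eq_right h2, max_eq_right hP.le]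
        have hcP : c ≤ -P := by linarith
        have := ho.monotone hcP
        rw [hco] at this
        rw [hqP]
        nlinarith [hq.2]
      · have hqc : qs = -c := by
          rw [hqs, min_eq_left h2.le, max_eq_right h1.le]
        rw [hqc]
        simp only [neg_neg, hco]
        nlinarith []
  exact aux_strict_min hg hmono hne hsign
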